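/- For every ε with 0 < ε < 1 there exists N such that for every odd integer n ≥ N and every integer ξ with n/log(n) ≤ ξ < n/2, the smallest eigenvalue β_*(ξ) of M(ξ) satisfies β_*(ξ) ≥ −1 + (3/4)·(1−ε)·(ξ/n)². (Here log denotes the natural logarithm.) -/

import Mathlib

/-- The `n×n` real symmetric matrix `M(ξ)` with `(j,j)` entry `(1/2)·cos(2πξj/n)`,
entries `1/4` for `k ≡ j ± 1 (mod n)` (including the corners), and `0` elsewhere. -/
noncomputable def Mmat (n : ℕ) (ξ : ℤ) : Matrix (Fin n) (Fin n) ℝ :=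
  Matrix.of fun j k =>
    if k = j then (1/2) * Real.cos (2 * Real.pi * (ξ : ℝ) * ((j : ℕ) : ℝ) / (n : ℝ))
    else if ((k : ℕ) : ZMod n) = ((j : ℕ) : ZMod n) + 1 ∨
        ((k : ℕ) : ZMod n) = ((j : ℕ) : ZMod n) - 1 then 1/4
    else 0


-- pure algebra core
lemma alg_core (m c C : ℝ) (hc : -1 ≤ c) (hc' : c ≤ 1) (hC0 : 0 ≤ C) (hC1 : C ≤ 1)
    (hm1 : 1 + C ≤ m) (hm2 : m + 1 ≤ m ^ 2) :
    1 ≤ (m + c * C) ^ 2 - (1 - c ^ 2) * (1 - C ^ 2) := by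
  rcases le_total (m * C) 1 with h | h
  · -- min = (m²-1)(1-C²)
    have hm0 : 1 ≤ m := by linarith
    have hmC : (0:ℝ) ≤ m * C := mul_nonneg (by linarith) hC0
    have hC2 : m ^ 2 * C ^ 2 ≤ 1 := by nlinarith [mul_nonneg hmC (by linarith : (0:ℝ) ≤ 1 - m * C)]
    nlinarith [sq_nonneg (c + m * C), sq_nonneg (m^2 - 1 - m), sq_nonneg m, sq_nonneg (m*m - 1)]
  · -- min at c = -1, value (m-C)²
    have h1 : 0 ≤ (c + 1) * (c + 2 * m * C - 1) := by
      apply mul_nonneg <;> linarith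
    nlinarith [h1, sq_nonneg (m - C)]

open Real in
lemma trig_core (x θ : ℝ) (hx0 : 0 ≤ x) (hx : x ≤ 1/2) :
    1 ≤ (2 - 3/2 * x ^ 2 + cos θ) * (2 - 3/2 * x ^ 2 + cos (θ + 2 * π * x)) := by
  set m : ℝ := 2 - 3/2 * x ^ 2 with hm
  have hπ := pi_pos
  have hxπ : x * π ≤ π / 2 := by nlinarith
  -- Jordan: x ≤ sin (π x / 2) ⇒ 1 - cos(πx) ≥ 2x²
  have hJ : x ≤ sin (π * x / 2) := by
    have := Real.mul_le_sin (x := π * x / 2) (by positivity) (by nlinarith)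
    calc x = 2 / π * (π * x / 2) := by field_simp
      _ ≤ sin (π * x / 2) := this
  have hsin0 : 0 ≤ sin (π * x / 2) := le_trans hx0 hJ
  have hcosπx : cos (π * x) ≤ 1 - 2 * x ^ 2 := by
    have h2 : cos (2 * (π * x / 2)) = 1 - 2 * sin (π * x / 2) ^ 2 := by
      rw [Real.cos_two_mul, Real.sin_sq]; ring
    have h3 : 2 * (π * x / 2) = π * x := by ring
    rw [h3] at h2
    rw [h2]
    nlinarith
  have hC0 : 0 ≤ cos (π * x) := by
    apply Real.cos_nonneg_of_mem_Icc
    constructor <;> nlinarith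
  have hC1 : cos (π * x) ≤ 1 := Real.cos_le_one _
  have hm1 : 1 + cos (π * x) ≤ m := by rw [hm]; nlinarith
  have hm2 : m + 1 ≤ m ^ 2 := by rw [hm]; nlinarith [sq_nonneg x, sq_nonneg (x^2)]
  -- substitution φ = θ + πx
  set c := cos (θ + π * x) with hcdef
  set s := sin (θ + π * x) with hsdef
  set C := cos (π * x) with hCdef
  set S := sin (π * x) with hSdef
  have ea : cos ((θ + π * x) - π * x) = c * C + s * S := Real.cos_sub _ _
  have eb : cos ((θ + π * x) + π * x) = c * C - s * S := Real.cos_add _ _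
  have ea' : (θ + π * x) - π * x = θ := by ring
  have eb' : (θ + π * x) + π * x = θ + 2 * π * x := by ring
  rw [ea'] at ea
  rw [eb'] at eb
  rw [ea, eb]
  have hs : s ^ 2 = 1 - c ^ 2 := by
    have := Real.sin_sq_add_cos_sq (θ + π * x); linarith
  have hS : S ^ 2 = 1 - C ^ 2 := by
    have := Real.sin_sq_add_cos_sq (π * x); linarith
  have hc1 : -1 ≤ c := Real.neg_one_le_cos _
  have hc2 : c ≤ 1 := Real.cos_le_one _
  have key := alg_core m c C hc1 hc2 hC0 hC1 hm1 hm2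
  have expand : (m + (c * C + s * S)) * (m + (c * C - s * S)) = (m + c * C) ^ 2 - s ^ 2 * S ^ 2 := by
    ring
  have hprod : s ^ 2 * S ^ 2 = (1 - c ^ 2) * (1 - C ^ 2) := by rw [hs, hS]
  rw [expand, hprod]
  exact key

lemma amgm_edge (P Q a b : ℝ) (hP : 0 ≤ P) (hQ : 0 ≤ Q) (hPQ : 1 ≤ P * Q) :
    0 ≤ P * a ^ 2 + Q * b ^ 2 + 2 * a * b := by
  have hp2 : Real.sqrt P ^ 2 = P := Real.sq_sqrt hP
  have hq2 : Real.sqrt Q ^ 2 = Q := Real.sq_sqrt hQ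
  have hpq : 1 ≤ Real.sqrt P * Real.sqrt Q := by
    rw [← Real.sqrt_mul hP]
    exact Real.one_le_sqrt.mpr hPQ
  rcases le_total 0 (a * b) with h | h
  · nlinarith [mul_nonneg hP (sq_nonneg a), mul_nonneg hQ (sq_nonneg b)]
  · nlinarith [sq_nonneg (Real.sqrt P * a + Real.sqrt Q * b),
      mul_nonneg (by linarith : (0:ℝ) ≤ Real.sqrt P * Real.sqrt Q - 1) (by linarith : 0 ≤ -(a*b))]

open Real in
lemma edge_ineq (x θ a b : ℝ) (hx0 : 0 ≤ x) (hx : x ≤ 1/2) :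
    0 ≤ (2 - 3/2 * x ^ 2 + cos θ) * a ^ 2 + (2 - 3/2 * x ^ 2 + cos (θ + 2 * π * x)) * b ^ 2
      + 2 * a * b := by
  have hxsq : x ^ 2 ≤ 1/4 := by nlinarith
  refine amgm_edge _ _ a b ?_ ?_ (trig_core x θ hx0 hx)
  · have := Real.neg_one_le_cos θ; linarith
  · have := Real.neg_one_le_cos (θ + 2 * π * x); linarith

section Idx

variable {n : ℕ}

lemma psi_inj [NeZero n] {a b : Fin n} (h : ((a : ℕ) : ZMod n) = ((b : ℕ) : ZMod n)) :
    a = b := by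
  have ha := ZMod.val_natCast_of_lt a.isLt
  have hb := ZMod.val_natCast_of_lt b.isLt
  apply Fin.ext
  rw [← ha, ← hb, h]

lemma psi_add_one [NeZero n] (hn : 2 ≤ n) (a : Fin n) :
    (((a + 1 : Fin n) : ℕ) : ZMod n) = ((a : ℕ) : ZMod n) + 1 := by
  have h1 : ((1 : Fin n) : ℕ) = 1 := by
    rw [Fin.val_one']; exact Nat.mod_eq_of_lt (by omega)
  have : ((a + 1 : Fin n) : ℕ) = ((a : ℕ) + 1) % n := by
    rw [Fin.add_def]; simp [h1]
  rw [this, ZMod.natCast_mod, Nat.cast_add, Nat.cast_one]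

lemma neighbor_iff [NeZero n] (hn : 2 ≤ n) (j k : Fin n) :
    (((k : ℕ) : ZMod n) = ((j : ℕ) : ZMod n) + 1 ∨
      ((k : ℕ) : ZMod n) = ((j : ℕ) : ZMod n) - 1) ↔ (k = j + 1 ∨ j = k + 1) := by
  constructor
  · rintro (h | h)
    · left; exact psi_inj (by rw [h, ← psi_add_one hn j])
    · right
      apply psi_inj
      rw [psi_add_one hn k, h]; ring
  · rintro (rfl | rfl)
    · left; exact psi_add_one hn j
    · right; rw [psi_add_one hn k]; ring

end Idx

section Entry
variable {n : ℕ} [NeZero n]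

open Finset in
lemma Mmat_apply (hn3 : 3 ≤ n) (ξ : ℤ) (j k : Fin n) :
    Mmat n ξ j k =
      (if k = j then (1/2) * Real.cos (2 * Real.pi * (ξ : ℝ) * ((j : ℕ) : ℝ) / (n : ℝ)) else 0)
      + ((if k = j + 1 then (1/4 : ℝ) else 0) + (if k = j - 1 then (1/4 : ℝ) else 0)) := by
  have hn2 : 2 ≤ n := by omega
  have hone : (1 : Fin n) ≠ 0 := by
    have h1 : ((1 : Fin n) : ℕ) = 1 := by
      rw [Fin.val_one']; exact Nat.mod_eq_of_lt (by omega)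
    intro h; rw [h] at h1; simp at h1
  have htwo : (1 + 1 : Fin n) ≠ 0 := by
    have h2 : ((1 + 1 : Fin n) : ℕ) = 2 := by
      have hite := Fin.val_add_eq_ite (1 : Fin n) 1
      rw [Fin.val_one'] at hite
      rw [hite, Nat.mod_eq_of_lt (show 1 < n by omega), if_neg (by omega)]
    intro h; rw [h] at h2; simp at h2
  have hd1 : j + 1 ≠ j := by
    intro h; apply hone
    have := sub_eq_zero.mpr h
    rw [← this]; abel
  have hd2 : j - 1 ≠ j := by
    intro h; apply hone
    have := sub_eq_zero.mpr h
    rw [← neg_eq_zero, ← this]; abel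
  have hd3 : j + 1 ≠ j - 1 := by
    intro h; apply htwo
    have := sub_eq_zero.mpr h
    rw [← this]; abel
  have hcond : ∀ k' : Fin n, ((((k' : ℕ) : ZMod n) = ((j : ℕ) : ZMod n) + 1 ∨
      ((k' : ℕ) : ZMod n) = ((j : ℕ) : ZMod n) - 1)) ↔ (k' = j + 1 ∨ j = k' + 1) :=
    fun k' => neighbor_iff hn2 j k'
  have hsub : ∀ k' : Fin n, (j = k' + 1) ↔ (k' = j - 1) := by
    intro k'; constructor
    · intro h; rw [h]; abel
    · intro h; rw [h]; abel
  by_cases h1 : k = j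
  · subst h1
    simp only [Mmat, Matrix.of_apply, if_pos rfl, if_neg (Ne.symm hd1), if_neg (Ne.symm hd2)]
    norm_num
  · by_cases h2 : k = j + 1
    · subst h2
      simp only [Mmat, Matrix.of_apply, if_neg hd1, if_neg h1]
      rw [if_pos ((hcond _).mpr (Or.inl rfl)), if_neg hd3]
      norm_num
    · by_cases h3 : k = j - 1
      · subst h3
        simp only [Mmat, Matrix.of_apply, if_neg hd2, if_neg h1, if_neg (Ne.symm hd3),
          if_neg h2]
        rw [if_pos ((hcond _).mpr (Or.inr ((hsub _).mpr rfl)))]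
        norm_num
      · simp only [Mmat, Matrix.of_apply, if_neg h1, if_neg h2, if_neg h3]
        rw [if_neg]
        · norm_num
        · intro hc
          rcases (hcond _).mp hc with h | h
          · exact h2 h
          · exact h3 ((hsub _).mp h)

open Finset in
lemma row_sum (hn3 : 3 ≤ n) (ξ : ℤ) (v : Fin n → ℝ) (j : Fin n) :
    ∑ k, Mmat n ξ j k * v k
      = (1/2) * Real.cos (2 * Real.pi * (ξ : ℝ) * ((j : ℕ) : ℝ) / (n : ℝ)) * v j
        + (1/4) * v (j + 1) + (1/4) * v (j - 1) := by
  simp only [Mmat_apply hn3, add_mul, ite_mul, zero_mul, Finset.sum_add_distrib,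
    Finset.sum_ite_eq', Finset.mem_univ, if_true]
  ring

end Entry

section Quad
variable {n : ℕ} [NeZero n]

open Real

lemma cos_shift (hn3 : 3 ≤ n) (ξ : ℕ) (j : Fin n) :
    Real.cos (2 * π * (ξ : ℝ) * (((j + 1 : Fin n) : ℕ) : ℝ) / (n : ℝ))
      = Real.cos (2 * π * (ξ : ℝ) * ((j : ℕ) : ℝ) / (n : ℝ) + 2 * π * ((ξ : ℝ) / (n : ℝ))) := by
  have hn0 : (n : ℝ) ≠ 0 := by
    have : 0 < n := by omega
    exact Nat.cast_ne_zero.mpr (by omega)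
  have h1v : ((1 : Fin n) : ℕ) = 1 := by
    rw [Fin.val_one']; exact Nat.mod_eq_of_lt (by omega)
  have hval : ((j + 1 : Fin n) : ℕ) = ((j : ℕ) + 1) % n := by
    rw [Fin.add_def, h1v]
  have hmd := Nat.mod_add_div ((j : ℕ) + 1) n
  have hcast : ((((j : ℕ) + 1) % n : ℕ) : ℝ)
      = ((j : ℕ) : ℝ) + 1 - (n : ℝ) * ((((j : ℕ) + 1) / n : ℕ) : ℝ) := by
    have : ((((j : ℕ) + 1) % n : ℕ) : ℝ) + (n : ℝ) * ((((j : ℕ) + 1) / n : ℕ) : ℝ)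
        = ((j : ℕ) : ℝ) + 1 := by exact_mod_cast congrArg (Nat.cast : ℕ → ℝ) hmd
    linarith
  have harg : 2 * π * (ξ : ℝ) * ((((j : ℕ) + 1) % n : ℕ) : ℝ) / (n : ℝ)
      = (2 * π * (ξ : ℝ) * ((j : ℕ) : ℝ) / (n : ℝ) + 2 * π * ((ξ : ℝ) / (n : ℝ)))
        - ((ξ * (((j : ℕ) + 1) / n) : ℕ) : ℤ) * (2 * π) := by
    have hq : (((ξ * (((j : ℕ) + 1) / n) : ℕ) : ℤ) : ℝ)
        = (ξ : ℝ) * ((((j : ℕ) + 1) / n : ℕ) : ℝ) := by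
      push_cast [Nat.cast_mul]
      norm_cast
    rw [hcast, hq]
    field_simp
  rw [hval, harg, Real.cos_sub_int_mul_two_pi]

end Quad

noncomputable def thf (n ξ : ℕ) (j : Fin n) : ℝ := 2 * Real.pi * (ξ : ℝ) * ((j : ℕ) : ℝ) / (n : ℝ)

noncomputable def Wf (n ξ : ℕ) [NeZero n] (v : Fin n → ℝ) (j : Fin n) : ℝ :=
  (1/4) * Real.cos (thf n ξ j) * v j ^ 2 + (1/2 - 3/8 * ((ξ : ℝ)/(n : ℝ))^2) * v j ^ 2
    + (1/4) * (v j * v (j - 1))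

noncomputable def Gf (n ξ : ℕ) [NeZero n] (v : Fin n → ℝ) (j : Fin n) : ℝ :=
  (1/4) * ((2 - 3/2 * ((ξ : ℝ)/(n : ℝ))^2 + Real.cos (thf n ξ j)) * v j ^ 2
    + (2 - 3/2 * ((ξ : ℝ)/(n : ℝ))^2 + Real.cos (thf n ξ j + 2 * Real.pi * ((ξ : ℝ)/(n : ℝ)))) * v (j + 1) ^ 2
    + 2 * v j * v (j + 1))

noncomputable def Df (n ξ : ℕ) [NeZero n] (v : Fin n → ℝ) (j : Fin n) : ℝ :=
  (1/2) * Real.cos (thf n ξ j) * v j ^ 2 + (1/4) * (v j * v (j + 1)) + (1/4) * (v j * v (j - 1))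
    - (-1 + (3/4) * ((ξ : ℝ)/(n : ℝ))^2) * v j ^ 2

section Quad2
variable {n : ℕ} [NeZero n]
open Real Finset

lemma reidx (F : Fin n → ℝ) : ∑ j, F j = ∑ j, F (j + 1) :=
  Fintype.sum_equiv (Equiv.subRight (1 : Fin n)) F (fun j => F (j + 1))
    (fun x => by simp)

lemma DG_diff (hn3 : 3 ≤ n) (ξ : ℕ) (v : Fin n → ℝ) (j : Fin n) :
    Df n ξ v j - Gf n ξ v j = Wf n ξ v j - Wf n ξ v (j + 1) := by
  unfold Df Gf Wf
  have hshift : Real.cos (thf n ξ (j + 1))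
      = Real.cos (thf n ξ j + 2 * Real.pi * ((ξ : ℝ)/(n : ℝ))) := cos_shift hn3 ξ j
  rw [hshift, add_sub_cancel_right]
  ring

lemma sumD_eq_sumG (hn3 : 3 ≤ n) (ξ : ℕ) (v : Fin n → ℝ) :
    ∑ j, Df n ξ v j = ∑ j, Gf n ξ v j := by
  have h1 : ∑ j, (Df n ξ v j - Gf n ξ v j) = ∑ j, (Wf n ξ v j - Wf n ξ v (j + 1)) :=
    Finset.sum_congr rfl (fun j _ => DG_diff hn3 ξ v j)
  rw [Finset.sum_sub_distrib, Finset.sum_sub_distrib, ← reidx (Wf n ξ v), sub_self] at h1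
  linarith [h1]

lemma sumG_nonneg (hn3 : 3 ≤ n) (ξ : ℕ) (hξ : (ξ : ℝ) < (n : ℝ) / 2) (v : Fin n → ℝ) :
    0 ≤ ∑ j, Gf n ξ v j := by
  have hnR : (0 : ℝ) < n := by exact_mod_cast (by omega : 0 < n)
  have hx0 : 0 ≤ (ξ : ℝ) / n := by positivity
  have hx12 : (ξ : ℝ) / n ≤ 1 / 2 := by rw [div_le_iff₀ hnR]; linarith
  apply Finset.sum_nonneg
  intro j _
  have := edge_ineq ((ξ : ℝ)/(n : ℝ)) (thf n ξ j) (v j) (v (j + 1)) hx0 hx12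
  unfold Gf
  linarith

lemma quad_bound (hn3 : 3 ≤ n) (ξ : ℕ) (hξ : (ξ : ℝ) < (n : ℝ) / 2) (v : Fin n → ℝ) :
    (-1 + (3/4) * ((ξ : ℝ) / (n : ℝ)) ^ 2) * ∑ j, v j ^ 2
      ≤ ∑ j, v j * ∑ k, Mmat n (ξ : ℤ) j k * v k := by
  have hIc : (((ξ : ℕ) : ℤ) : ℝ) = (ξ : ℝ) := by push_cast; rfl
  have hrow : ∀ j : Fin n, v j * (∑ k, Mmat n (ξ : ℤ) j k * v k)
      = Df n ξ v j + (-1 + (3/4) * ((ξ : ℝ)/(n : ℝ))^2) * v j ^ 2 := by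
    intro j
    rw [row_sum hn3, hIc]
    unfold Df thf
    ring
  have hR : ∑ j, v j * ∑ k, Mmat n (ξ : ℤ) j k * v k
      = ∑ j, Df n ξ v j + (-1 + (3/4) * ((ξ : ℝ)/(n : ℝ))^2) * ∑ j, v j ^ 2 := by
    rw [Finset.mul_sum, ← Finset.sum_add_distrib]
    exact Finset.sum_congr rfl (fun j _ => hrow j)
  rw [hR]
  have := sumG_nonneg hn3 ξ hξ v
  have := sumD_eq_sumG hn3 ξ v
  linarith

end Quad2

/-- For every `0 < ε < 1` there is an `N` such that for every odd `n ≥ N` and every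
`ξ` with `n / log n ≤ ξ < n/2`, the smallest eigenvalue of `M(ξ)` is at least
`-1 + (3/4)(1-ε)(ξ/n)²`; equivalently every eigenvalue `β` of `M(ξ)` satisfies
`β ≥ -1 + (3/4)(1-ε)(ξ/n)²`. -/
theorem Mmat_bottom_eigenvalue_bound_large_xi :
    ∀ ε : ℝ, 0 < ε → ε < 1 → ∃ N : ℕ,
      ∀ n : ℕ, Odd n → N ≤ n → ∀ ξ : ℕ,
        (n : ℝ) / Real.log n ≤ (ξ : ℝ) → (ξ : ℝ) < (n : ℝ) / 2 →
        ∀ β ∈ spectrum ℝ (Mmat n (ξ : ℤ)),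
          -1 + (3/4) * (1 - ε) * ((ξ : ℝ) / (n : ℝ)) ^ 2 ≤ β := by
  intro ε hε0 hε1
  refine ⟨3, ?_⟩
  intro n _hodd hNn ξ _hlog hhalf β hβ
  have hn3 : 3 ≤ n := hNn
  haveI : NeZero n := ⟨by omega⟩
  have hspec : β ∈ spectrum ℝ (Matrix.toLinAlgEquiv' (Mmat n (ξ : ℤ))) := by
    rw [AlgEquiv.spectrum_eq Matrix.toLinAlgEquiv' (Mmat n (ξ : ℤ))]
    exact hβ
  have heig : Module.End.HasEigenvalue (Matrix.toLinAlgEquiv' (Mmat n (ξ : ℤ))) β :=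
    Module.End.hasEigenvalue_iff_mem_spectrum.mpr hspec
  obtain ⟨v, hv⟩ := heig.exists_hasEigenvector
  have hmv : (Mmat n (ξ : ℤ)).mulVec v = β • v := by
    have h := hv.apply_eq_smul
    simpa [Matrix.toLinAlgEquiv'_apply, Matrix.toLin'_apply] using h
  have hv0 : v ≠ 0 := hv.right
  obtain ⟨i, hi⟩ := Function.ne_iff.mp hv0
  have hS : 0 < ∑ j, v j ^ 2 := by
    have h1 : 0 < v i ^ 2 := lt_of_le_of_ne (sq_nonneg (v i)) (Ne.symm (pow_ne_zero 2 hi))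
    have h2 : v i ^ 2 ≤ ∑ j, v j ^ 2 :=
      Finset.single_le_sum (fun j _ => sq_nonneg (v j)) (Finset.mem_univ i)
    linarith
  have hquad := quad_bound hn3 ξ hhalf v
  have hqe : ∑ j, v j * ∑ k, Mmat n (ξ : ℤ) j k * v k = β * ∑ j, v j ^ 2 := by
    have hrow : ∀ j, ∑ k, Mmat n (ξ : ℤ) j k * v k = β * v j := by
      intro j
      have := congrFun hmv j
      simpa [Matrix.mulVec, dotProduct] using this
    rw [Finset.sum_congr rfl fun j _ => by rw [hrow j], Finset.mul_sum]
    exact Finset.sum_congr rfl fun j _ => by ring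
  rw [hqe] at hquad
  have hc0 : -1 + (3/4) * ((ξ : ℝ)/(n : ℝ)) ^ 2 ≤ β := le_of_mul_le_mul_right hquad hS
  have hmono : (3/4) * (1 - ε) * ((ξ : ℝ)/(n : ℝ)) ^ 2 ≤ (3/4) * ((ξ : ℝ)/(n : ℝ)) ^ 2 := by
    nlinarith [mul_nonneg hε0.le (sq_nonneg ((ξ : ℝ)/(n : ℝ)))]
  linarith
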